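/- Fix d ≥ 2 and an integer r with r ∉ {1,2,4}, and let N, k ∈ ℕ. Let y ∈ X_r satisfy Range_{∂D_{2N+2r+k+1}}(y) ≤ 2k and let x ∈ X_r. Then: (1) if r is odd, or if for all n ∈ ℤ^d the element x_n − y_n ∈ ℤ/rℤ is the residue of an even integer, then there exists z ∈ X_r with z_n = x_n for n ∈ D_N and z_n = y_n for n ∉ D_{2N+2r+k+1}; (2) if r is even and for all n ∈ ℤ^d the element x_n − y_n is the residue of an odd integer, then there exists z ∈ X_r with z_n = x_{n+e₁} for n ∈ D_N and z_n = y_n for n ∉ D_{2N+2r+k+1}. -/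

import Mathlib

open scoped BigOperators

/-- Sites of the standard Cayley graph of `ℤ^d`. -/
abbrev Site (d : ℕ) := Fin d → ℤ

/-- Adjacency in the standard Cayley graph of `ℤ^d`: `‖n - m‖₁ = 1`. -/
def adjacent {d : ℕ} (n m : Site d) : Prop :=
  (∑ i, |n i - m i|) = 1

/-- The (outer) boundary of a set of sites. -/
def siteBdry {d : ℕ} (F : Set (Site d)) : Set (Site d) :=
  {m | m ∉ F ∧ ∃ n ∈ F, adjacent n m}

/-- The nearest neighbor shift of finite type `X_r`. -/
def Xr (d r : ℕ) : Set (Site d → ZMod r) :=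
  {x | ∀ n m : Site d, adjacent n m → x n - x m = 1 ∨ x n - x m = -1}

/-- A height function on `ℤ^d`. -/
def IsHeightFn {d : ℕ} (h : Site d → ℤ) : Prop :=
  ∀ n m : Site d, adjacent n m → |h n - h m| = 1

/-- `h` is a height-function lift of the configuration `x ∈ (ℤ/rℤ)^{ℤ^d}`. -/
def LiftsTo {d r : ℕ} (h : Site d → ℤ) (x : Site d → ZMod r) : Prop :=
  IsHeightFn h ∧ ∀ n : Site d, ((h n : ZMod r)) = x n

/-- `Range_A(h) = max_{n ∈ A} h n - min_{n ∈ A} h n`. -/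
noncomputable def RangeOn {d : ℕ} (h : Site d → ℤ) (A : Set (Site d)) : ℤ :=
  sSup (h '' A) - sInf (h '' A)

/-- The `l¹`-ball `D_N = {n ∈ ℤ^d : ‖n‖₁ ≤ N}`. -/
def ball (d N : ℕ) : Set (Site d) :=
  {n | (∑ i, |n i|) ≤ (N : ℤ)}

section AuxPatch

def nrm {d : ℕ} (n : Site d) : ℤ := ∑ i, |n i|

lemma adj_iff {d : ℕ} {n m : Site d} :
    adjacent n m ↔ ∃ i, |n i - m i| = 1 ∧ ∀ j, j ≠ i → n j = m j := by
  constructor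
  · intro h
    have hne : ∃ i, n i ≠ m i := by
      by_contra hc
      push_neg at hc
      have : (∑ i, |n i - m i|) = 0 :=
        Finset.sum_eq_zero fun i _ => by rw [hc i]; simp
      rw [adjacent] at h; omega
    obtain ⟨i, hi⟩ := hne
    rw [adjacent] at h
    have hsplit : |n i - m i| + ∑ j ∈ Finset.univ.erase i, |n j - m j| = 1 := by
      have := Finset.add_sum_erase Finset.univ (fun j => |n j - m j|) (Finset.mem_univ i)
      rw [this]; exact h
    have hrest : (∑ j ∈ Finset.univ.erase i, |n j - m j|) = 0 := by
      have h1 : (1:ℤ) ≤ |n i - m i| := by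
        have := abs_pos.mpr (sub_ne_zero.mpr hi); omega
      have hnn : (0:ℤ) ≤ ∑ j ∈ Finset.univ.erase i, |n j - m j| :=
        Finset.sum_nonneg fun j _ => abs_nonneg _
      omega
    refine ⟨i, by omega, fun j hj => ?_⟩
    have := (Finset.sum_eq_zero_iff_of_nonneg (fun j _ => abs_nonneg (n j - m j))).mp hrest j
      (Finset.mem_erase.mpr ⟨hj, Finset.mem_univ j⟩)
    have := abs_eq_zero.mp this
    omega
  · rintro ⟨i, hi, ho⟩
    rw [adjacent]
    rw [Finset.sum_eq_single i]
    · exact hi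
    · intro j _ hj; rw [ho j hj]; simp
    · intro h; exact absurd (Finset.mem_univ i) h

lemma adj_symm {d : ℕ} {n m : Site d} (h : adjacent n m) : adjacent m n := by
  rw [adjacent] at h ⊢
  rw [show (∑ i, |m i - n i|) = ∑ i, |n i - m i| from
    Finset.sum_congr rfl fun i _ => abs_sub_comm _ _]
  exact h

lemma adj_nrm {d : ℕ} {n m : Site d} (h : adjacent n m) :
    nrm m = nrm n + 1 ∨ nrm m = nrm n - 1 := by
  obtain ⟨i, hi, ho⟩ := adj_iff.mp h
  have hsum : nrm m - nrm n = |m i| - |n i| := by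
    rw [nrm, nrm, ← Finset.sum_sub_distrib]
    rw [Finset.sum_eq_single i]
    · intro j _ hj; rw [ho j hj]; ring
    · intro h; exact absurd (Finset.mem_univ i) h
  rcases abs_cases (n i) with ⟨h1, _⟩|⟨h1, _⟩ <;>
    rcases abs_cases (m i) with ⟨h2, _⟩|⟨h2, _⟩ <;>
    rcases abs_cases (n i - m i) with ⟨h3, _⟩|⟨h3, _⟩ <;>
    omega

lemma step_to_zero {d : ℕ} {n : Site d} (h : n ≠ 0) :
    ∃ m, adjacent n m ∧ nrm m = nrm n - 1 := by
  have hne : ∃ i, n i ≠ 0 := by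
    by_contra hc; push_neg at hc; exact h (funext fun i => hc i)
  obtain ⟨i, hi⟩ := hne
  have key : ∀ v : ℤ, |v| = 1 → |n i - v| = |n i| - 1 →
      ∃ m, adjacent n m ∧ nrm m = nrm n - 1 := by
    intro v hv hv2
    refine ⟨Function.update n i (n i - v), ?_, ?_⟩
    · rw [adj_iff]
      refine ⟨i, ?_, fun j hj => (Function.update_of_ne hj _ _).symm⟩
      rw [Function.update_self]
      simpa using hv
    · have : nrm (Function.update n i (n i - v)) - nrm n
          = |Function.update n i (n i - v) i| - |n i| := by
        rw [nrm, nrm, ← Finset.sum_sub_distrib]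
        rw [Finset.sum_eq_single i]
        · intro j _ hj; rw [Function.update_of_ne hj]; ring
        · intro hmem; exact absurd (Finset.mem_univ i) hmem
      rw [Function.update_self, hv2] at this
      omega
  by_cases hpos : 0 < n i
  · refine key 1 (by norm_num) ?_
    rcases abs_cases (n i - 1) with ⟨h2, _⟩|⟨h2, _⟩ <;>
      rcases abs_cases (n i) with ⟨h3, _⟩|⟨h3, _⟩ <;> omega
  · refine key (-1) (by norm_num) ?_
    rcases abs_cases (n i - -1) with ⟨h2, _⟩|⟨h2, _⟩ <;>
      rcases abs_cases (n i) with ⟨h3, _⟩|⟨h3, _⟩ <;> omega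

lemma nrm_nonneg {d : ℕ} (n : Site d) : 0 ≤ nrm n :=
  Finset.sum_nonneg fun i _ => abs_nonneg _

lemma nrm_zero_iff {d : ℕ} {n : Site d} : nrm n = 0 ↔ n = 0 := by
  constructor
  · intro h
    funext i
    have := (Finset.sum_eq_zero_iff_of_nonneg
      (fun j (_ : j ∈ Finset.univ) => abs_nonneg (n j))).mp h i (Finset.mem_univ i)
    simpa using abs_eq_zero.mp this
  · intro h; subst h; simp [nrm]

/-- Induction principle walking towards the origin. -/
lemma nrm_induction {d : ℕ} (P : Site d → Prop) (h0 : P 0)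
    (hstep : ∀ n m : Site d, adjacent n m → nrm m = nrm n - 1 → P m → P n) :
    ∀ n, P n := by
  have key : ∀ s : ℕ, ∀ n : Site d, nrm n = s → P n := by
    intro s
    induction s with
    | zero =>
      intro n hn
      have : n = 0 := nrm_zero_iff.mp (by exact_mod_cast hn)
      rw [this]; exact h0
    | succ s ih =>
      intro n hn
      have hne : n ≠ 0 := by
        intro h; subst h; simp [nrm] at hn; omega
      obtain ⟨m, hadj, hm⟩ := step_to_zero hne
      exact hstep n m hadj hm (ih m (by omega))
  intro n
  exact key (nrm n).toNat n (Int.toNat_of_nonneg (nrm_nonneg n)).symm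

lemma height_abs {d : ℕ} {f : Site d → ℤ} (hf : IsHeightFn f) :
    ∀ n, |f n - f 0| ≤ nrm n := by
  apply nrm_induction
  · simp [nrm]
  · intro n m hadj hm ih
    have h1 := hf n m hadj
    rcases abs_cases (f n - f m) with ⟨e, _⟩|⟨e, _⟩ <;>
      rcases abs_cases (f n - f 0) with ⟨e2, _⟩|⟨e2, _⟩ <;>
      rcases abs_cases (f m - f 0) with ⟨e3, _⟩|⟨e3, _⟩ <;> omega

lemma height_parity {d : ℕ} {f : Site d → ℤ} (hf : IsHeightFn f) :
    ∀ n, (f n - f 0 - nrm n) % 2 = 0 := by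
  apply nrm_induction
  · simp [nrm]
  · intro n m hadj hm ih
    have h1 := hf n m hadj
    rcases abs_cases (f n - f m) with ⟨e, _⟩|⟨e, _⟩ <;> omega

lemma const_of_adj {d : ℕ} {α : Type*} {u : Site d → α}
    (h : ∀ n m, adjacent n m → u n = u m) : ∀ n, u n = u 0 := by
  apply nrm_induction (P := fun n => u n = u 0)
  · rfl
  · intro n m hadj _ ih; rw [h n m hadj]; exact ih

lemma isHeightFn_max {d : ℕ} {u v : Site d → ℤ} (hu : IsHeightFn u) (hv : IsHeightFn v)
    (he : ∀ n, (u n - v n) % 2 = 0) : IsHeightFn (fun n => max (u n) (v n)) := by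
  intro n m h
  have h1 := hu n m h
  have h2 := hv n m h
  have e1 := he n
  have e2 := he m
  show |max (u n) (v n) - max (u m) (v m)| = 1
  rw [abs_eq (by norm_num : (0:ℤ) ≤ 1)] at h1 h2 ⊢
  rcases max_cases (u n) (v n) with ⟨h3, h4⟩|⟨h3, h4⟩ <;>
    rcases max_cases (u m) (v m) with ⟨h5, h6⟩|⟨h5, h6⟩ <;>
    rw [h3, h5] <;> omega

lemma isHeightFn_min {d : ℕ} {u v : Site d → ℤ} (hu : IsHeightFn u) (hv : IsHeightFn v)
    (he : ∀ n, (u n - v n) % 2 = 0) : IsHeightFn (fun n => min (u n) (v n)) := by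
  intro n m h
  have h1 := hu n m h
  have h2 := hv n m h
  have e1 := he n
  have e2 := he m
  show |min (u n) (v n) - min (u m) (v m)| = 1
  rw [abs_eq (by norm_num : (0:ℤ) ≤ 1)] at h1 h2 ⊢
  rcases min_cases (u n) (v n) with ⟨h3, h4⟩|⟨h3, h4⟩ <;>
    rcases min_cases (u m) (v m) with ⟨h5, h6⟩|⟨h5, h6⟩ <;>
    rw [h3, h5] <;> omega

lemma isHeightFn_add_nrm {d : ℕ} (a : ℤ) : IsHeightFn (fun n : Site d => a + nrm n) := by
  intro n m h
  show |a + nrm n - (a + nrm m)| = 1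
  rcases adj_nrm h with h1|h1 <;> rw [h1] <;> ring_nf <;> norm_num

lemma isHeightFn_sub_nrm {d : ℕ} (a : ℤ) : IsHeightFn (fun n : Site d => a - nrm n) := by
  intro n m h
  show |a - nrm n - (a - nrm m)| = 1
  rcases adj_nrm h with h1|h1 <;> rw [h1] <;> ring_nf <;> norm_num

section Lift

variable {d r : ℕ} (x : Site d → ZMod r)

def stp (n m : Site d) : ℤ := if x n - x m = 1 then 1 else -1

lemma stp_one_or (n m : Site d) : stp x n m = 1 ∨ stp x n m = -1 := by
  rw [stp]; split <;> simp

lemma stp_cast (hx : x ∈ Xr d r) {n m : Site d} (h : adjacent n m) :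
    ((stp x n m : ℤ) : ZMod r) = x n - x m := by
  rcases hx n m h with h1|h1 <;> rw [stp] <;> [rw [if_pos h1]; skip]
  · rw [h1]; norm_num
  · split
    · next h2 => rw [h2]; norm_num
    · rw [h1]; norm_num

lemma stp_neg (hx : x ∈ Xr d r) (h2 : (2 : ZMod r) ≠ 0) {n m : Site d} (h : adjacent n m) :
    stp x m n = - stp x n m := by
  have hne : ¬ ((-1 : ZMod r) = 1) := by
    intro hc; apply h2; linear_combination -hc
  rcases hx n m h with h1|h1
  · have h1' : x m - x n = -1 := by linear_combination -h1
    rw [stp, stp, if_pos h1, if_neg (by rw [h1']; exact hne)]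
  · have h1' : x m - x n = 1 := by linear_combination -h1
    rw [stp, stp, if_pos h1', if_neg (by rw [h1]; exact hne)]
    norm_num

lemma plaq (hx : x ∈ Xr d r) (h2 : (2 : ZMod r) ≠ 0) (h4 : (4 : ZMod r) ≠ 0)
    {a b b' c : Site d} (hcb : adjacent c b) (hba : adjacent b a)
    (hcb' : adjacent c b') (hb'a : adjacent b' a) :
    stp x c b + stp x b a = stp x c b' + stp x b' a := by
  have e : (((stp x c b + stp x b a) - (stp x c b' + stp x b' a) : ℤ) : ZMod r) = 0 := by
    push_cast
    rw [stp_cast x hx hcb, stp_cast x hx hba, stp_cast x hx hcb', stp_cast x hx hb'a]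
    ring
  rcases stp_one_or x c b with u1|u1 <;> rcases stp_one_or x b a with u2|u2 <;>
    rcases stp_one_or x c b' with u3|u3 <;> rcases stp_one_or x b' a with u4|u4 <;>
    rw [u1, u2, u3, u4] at e ⊢ <;>
    first
      | rfl
      | (exfalso; apply h2; norm_num at e; linear_combination e)
      | (exfalso; apply h2; norm_num at e; linear_combination -e)
      | (exfalso; apply h4; norm_num at e; linear_combination e)
      | (exfalso; apply h4; norm_num at e; linear_combination -e)

end Lift

section Cum

def cum (w : ℤ → ℤ) (t : ℤ) : ℤ :=
  (∑ j ∈ Finset.range t.toNat, w j) - ∑ j ∈ Finset.range (-t).toNat, w (-1 - j)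

lemma cum_zero (w : ℤ → ℤ) : cum w 0 = 0 := by simp [cum]

lemma cum_succ (w : ℤ → ℤ) (t : ℤ) : cum w (t + 1) = cum w t + w t := by
  rcases le_or_gt 0 t with ht|ht
  · have h1 : (-t).toNat = 0 := by omega
    have h2 : (-(t+1)).toNat = 0 := by omega
    have h3 : (t+1).toNat = t.toNat + 1 := by omega
    rw [cum, cum, h1, h2, h3, Finset.sum_range_succ]
    rw [Int.toNat_of_nonneg ht]
    simp
  · have h1 : (t+1).toNat = 0 := by omega
    have h2 : t.toNat = 0 := by omega
    have h3 : (-t).toNat = (-(t+1)).toNat + 1 := by omega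
    rw [cum, cum, h1, h2, h3, Finset.sum_range_succ]
    have h4 : (-1 - ((-(t+1)).toNat : ℤ)) = t := by omega
    rw [h4]
    simp

end Cum

section Construct

variable {d r : ℕ} (x : Site d → ZMod r)

/-- Truncation: keep coordinates `< c`, zero out the rest. -/
def T (n : Site d) (c : ℕ) : Site d := fun j => if (j : ℕ) < c then n j else 0

lemma T_full (n : Site d) : T n d = n := by
  funext j; rw [T, if_pos j.isLt]

lemma upd_T (n : Site d) (j : Fin d) (v : ℤ) :
    Function.update (T n j) j v = T (Function.update n j v) ((j : ℕ) + 1) := by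
  funext j'
  by_cases hj : j' = j
  · subst hj
    rw [Function.update_self, T, if_pos (by omega), Function.update_self]
  · rw [Function.update_of_ne hj, T, T, Function.update_of_ne hj]
    have : ((j' : ℕ) < (j : ℕ) + 1) ↔ ((j' : ℕ) < (j : ℕ)) := by
      constructor
      · intro h
        rcases Nat.lt_succ_iff_lt_or_eq.mp h with h|h
        · exact h
        · exact absurd (Fin.ext h) hj
      · omega
    simp only [this]

lemma adj_update {b : Site d} {i : Fin d} {s t : ℤ} (h : |s - t| = 1) :
    adjacent (Function.update b i s) (Function.update b i t) := by
  rw [adj_iff]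
  refine ⟨i, ?_, fun j hj => by rw [Function.update_of_ne hj, Function.update_of_ne hj]⟩
  rw [Function.update_self, Function.update_self]
  exact h

def wf (n : Site d) (i : Fin d) (t : ℤ) : ℤ :=
  stp x (Function.update (T n i) i (t + 1)) (Function.update (T n i) i t)

def FF (n : Site d) : ℤ := ∑ i : Fin d, cum (wf x n i) (n i)

lemma parallel (hx : x ∈ Xr d r) (h2 : (2 : ZMod r) ≠ 0) (h4 : (4 : ZMod r) ≠ 0)
    {i j : Fin d} (hij : j ≠ i) {b b' : Site d} (hb : b i = 0)
    (hb' : b' = Function.update b j (b j + 1)) (s : ℤ) :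
    cum (fun t => stp x (Function.update b' i (t+1)) (Function.update b' i t)) s
      - cum (fun t => stp x (Function.update b i (t+1)) (Function.update b i t)) s
    = stp x (Function.update b' i s) (Function.update b i s) - stp x b' b := by
  -- basic adjacency facts
  have hvert : ∀ t : ℤ, adjacent (Function.update b' i t) (Function.update b i t) := by
    intro t
    have : Function.update b' i t = Function.update (Function.update b i t) j
        ((Function.update b i t) j + 1) := by
      rw [hb', Function.update_comm hij, Function.update_of_ne hij]
    rw [this, adj_iff]
    refine ⟨j, ?_, fun j' hj' => by rw [Function.update_of_ne hj']⟩
    rw [Function.update_self]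
    norm_num
  have hhorz : ∀ (c : Site d) (t : ℤ), adjacent (Function.update c i (t+1)) (Function.update c i t) :=
    fun c t => adj_update (by norm_num)
  have key : ∀ t : ℤ,
      stp x (Function.update b' i (t+1)) (Function.update b' i t)
        - stp x (Function.update b i (t+1)) (Function.update b i t)
      = stp x (Function.update b' i (t+1)) (Function.update b i (t+1))
        - stp x (Function.update b' i t) (Function.update b i t) := by
    intro t
    have := plaq x hx h2 h4 (a := Function.update b i t)
      (b := Function.update b i (t+1)) (b' := Function.update b' i t)
      (c := Function.update b' i (t+1))
      (hvert (t+1)) (hhorz b t) (hhorz b' t) (hvert t)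
    omega
  have hb0 : Function.update b i (0:ℤ) = b := by
    rw [← hb]; exact Function.update_eq_self i b
  have hb'0 : Function.update b' i (0:ℤ) = b' := by
    have : b' i = 0 := by rw [hb', Function.update_of_ne (Ne.symm hij), hb]
    rw [← this]; exact Function.update_eq_self i b'
  induction s using Int.induction_on with
  | zero => rw [cum_zero, cum_zero, hb0, hb'0]; ring
  | succ s ih =>
    rw [cum_succ, cum_succ]
    have := key s
    omega
  | pred s ih =>
    have e1 : cum (fun t => stp x (Function.update b' i (t+1)) (Function.update b' i t)) (-s) =
        cum (fun t => stp x (Function.update b' i (t+1)) (Function.update b' i t)) (-s-1)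
          + stp x (Function.update b' i (-s-1+1)) (Function.update b' i (-s-1)) := by
      rw [← cum_succ]; norm_num
    have e2 : cum (fun t => stp x (Function.update b i (t+1)) (Function.update b i t)) (-s) =
        cum (fun t => stp x (Function.update b i (t+1)) (Function.update b i t)) (-s-1)
          + stp x (Function.update b i (-s-1+1)) (Function.update b i (-s-1)) := by
      rw [← cum_succ]; norm_num
    have := key (-s-1)
    have h5 : (-s-1+1 : ℤ) = -s := by ring
    rw [h5] at e1 e2 this
    omega

end Construct

section Assemble

variable {d r : ℕ} (x : Site d → ZMod r)

lemma FF_step (hx : x ∈ Xr d r) (h2 : (2 : ZMod r) ≠ 0) (h4 : (4 : ZMod r) ≠ 0)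
    (n : Site d) (j : Fin d) :
    FF x (Function.update n j (n j + 1)) - FF x n
      = stp x (Function.update n j (n j + 1)) n := by
  set n' := Function.update n j (n j + 1) with hn'
  set σ : ℕ → ℤ := fun c => if (j : ℕ) < c then stp x (T n' c) (T n c) else 0 with hσ
  have hterm : ∀ i : Fin d,
      cum (wf x n' i) (n' i) - cum (wf x n i) (n i) = σ ((i : ℕ) + 1) - σ (i : ℕ) := by
    intro i
    rcases lt_trichotomy ((i : ℕ)) ((j : ℕ)) with hij|hij|hij
    · -- i < j
      have hTn : T n' i = T n i := by
        funext j'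
        rw [T, T]
        split
        · next hlt =>
          exact Function.update_of_ne (by intro hc; subst hc; simp at hlt; omega) _ _
        · rfl
      have hni : n' i = n i :=
        Function.update_of_ne (by intro hc; subst hc; omega) _ _
      have hwf : wf x n' i = wf x n i := by
        funext t; rw [wf, wf, hTn]
      rw [hwf, hni, hσ]
      simp only
      rw [if_neg (by omega), if_neg (by omega)]
      ring
    · -- i = j
      have hijf : i = j := Fin.ext hij
      subst hijf
      have hTn : T n' i = T n i := by
        funext j'
        rw [T, T]
        split
        · next hlt =>
          exact Function.update_of_ne (by intro hc; subst hc; simp at hlt) _ _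
        · rfl
      have hni : n' i = n i + 1 := by rw [hn', Function.update_self]
      have hwf : wf x n' i = wf x n i := by
        funext t; rw [wf, wf, hTn]
      rw [hwf, hni, cum_succ]
      have hup1 : Function.update (T n i) i (n i + 1) = T n' ((i : ℕ) + 1) := by
        rw [upd_T, hn']
      have hup0 : Function.update (T n i) i (n i) = T n ((i : ℕ) + 1) := by
        rw [upd_T, Function.update_eq_self]
      rw [hσ]
      simp only
      rw [if_pos (by omega), if_neg (by omega), wf, hup1, hup0]
      ring
    · -- j < i
      have hji : j ≠ i := by intro hc; subst hc; omega
      have hbi : (T n i) i = 0 := by rw [T, if_neg (by omega)]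
      have hb' : T n' i = Function.update (T n i) j ((T n i) j + 1) := by
        funext j'
        by_cases hj' : j' = j
        · subst hj'
          rw [Function.update_self, T, T, if_pos (by omega), if_pos (by omega), hn',
            Function.update_self]
        · rw [Function.update_of_ne hj', T, T]
          split
          · exact Function.update_of_ne hj' _ _
          · rfl
      have hpar := parallel x hx h2 h4 hji hbi hb' (n i)
      have hni : n' i = n i :=
        Function.update_of_ne (Ne.symm hji) _ _
      have hwfn : (fun t => stp x (Function.update (T n i) i (t+1)) (Function.update (T n i) i t))
          = wf x n i := by funext t; rw [wf]
      have hwfn' : (fun t => stp x (Function.update (T n' i) i (t+1)) (Function.update (T n' i) i t))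
          = wf x n' i := by funext t; rw [wf]
      rw [hwfn, hwfn'] at hpar
      have hup1 : Function.update (T n' i) i (n i) = T n' ((i : ℕ) + 1) := by
        rw [← hni, upd_T, Function.update_eq_self]
      have hup0 : Function.update (T n i) i (n i) = T n ((i : ℕ) + 1) := by
        rw [upd_T, Function.update_eq_self]
      rw [hup1, hup0] at hpar
      rw [hni, hσ]
      simp only
      rw [if_pos (by omega), if_pos (by omega)]
      exact hpar
  calc FF x n' - FF x n
      = ∑ i : Fin d, (cum (wf x n' i) (n' i) - cum (wf x n i) (n i)) := by
        rw [FF, FF, Finset.sum_sub_distrib]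
    _ = ∑ i : Fin d, (σ ((i : ℕ) + 1) - σ (i : ℕ)) := Finset.sum_congr rfl fun i _ => hterm i
    _ = ∑ i ∈ Finset.range d, (σ (i + 1) - σ i) := by exact Fin.sum_univ_eq_sum_range (fun c => σ (c + 1) - σ c) d
    _ = σ d - σ 0 := Finset.sum_range_sub σ d
    _ = stp x n' n := by
        rw [hσ]
        simp only
        rw [if_pos j.isLt, if_neg (by omega), T_full, T_full]
        ring

lemma FF_adj (hx : x ∈ Xr d r) (h2 : (2 : ZMod r) ≠ 0) (h4 : (4 : ZMod r) ≠ 0)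
    {n m : Site d} (h : adjacent n m) : FF x n - FF x m = stp x n m := by
  obtain ⟨i, hi, ho⟩ := adj_iff.mp h
  rw [abs_eq (by norm_num : (0:ℤ) ≤ 1)] at hi
  rcases hi with hi|hi
  · have hm : n = Function.update m i (m i + 1) := by
      funext j
      by_cases hj : j = i
      · subst hj; rw [Function.update_self]; omega
      · rw [Function.update_of_ne hj]; exact ho j hj
    rw [hm]
    exact FF_step x hx h2 h4 m i
  · have hm : m = Function.update n i (n i + 1) := by
      funext j
      by_cases hj : j = i
      · subst hj; rw [Function.update_self]; omega
      · rw [Function.update_of_ne hj]; exact (ho j hj).symm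
    have hstep := FF_step x hx h2 h4 n i
    rw [← hm] at hstep
    have hneg := stp_neg x hx h2 h
    omega

theorem exists_lift (hx : x ∈ Xr d r) (h2 : (2 : ZMod r) ≠ 0) (h4 : (4 : ZMod r) ≠ 0) :
    ∃ f : Site d → ℤ, LiftsTo f x := by
  obtain ⟨c, hc⟩ := ZMod.intCast_surjective (x 0 - ((FF x 0 : ℤ) : ZMod r))
  refine ⟨fun n => FF x n + c, ?_, ?_⟩
  · intro n m h
    have hFF := FF_adj x hx h2 h4 h
    show |FF x n + c - (FF x m + c)| = 1
    rcases stp_one_or x n m with h1|h1 <;> rw [h1] at hFF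
    · rw [show FF x n + c - (FF x m + c) = 1 by omega]; norm_num
    · rw [show FF x n + c - (FF x m + c) = -1 by omega]; norm_num
  · have hconst := const_of_adj (u := fun n => ((FF x n + c : ℤ) : ZMod r) - x n) (by
      intro n m h
      have h1 := FF_adj x hx h2 h4 h
      have h2' := stp_cast x hx h
      have h3 : ((FF x n - FF x m : ℤ) : ZMod r) = x n - x m := by rw [h1]; exact h2'
      show ((FF x n + c : ℤ) : ZMod r) - x n = ((FF x m + c : ℤ) : ZMod r) - x m
      push_cast at h3 ⊢
      linear_combination h3)
    intro n
    have hn := hconst n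
    have h0 : ((FF x 0 + c : ℤ) : ZMod r) - x 0 = 0 := by
      push_cast [hc]
      ring
    rw [h0] at hn
    have := sub_eq_zero.mp hn
    exact this

end Assemble

section Glue

lemma nrm_single {d : ℕ} (i : Fin d) (v : ℤ) : nrm (Pi.single i v) = |v| := by
  rw [nrm, Finset.sum_eq_single i]
  · rw [Pi.single_eq_same]
  · intro j _ hj; rw [Pi.single_eq_of_ne hj]; simp
  · intro h; exact absurd (Finset.mem_univ i) h

lemma mem_bdry_ball {d M : ℕ} {q : Site d} :
    q ∈ siteBdry (ball d M) ↔ nrm q = (M : ℤ) + 1 := by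
  constructor
  · rintro ⟨hq, p, hp, hadj⟩
    have h1 : ¬ nrm q ≤ (M : ℤ) := hq
    have h2 : nrm p ≤ (M : ℤ) := hp
    rcases adj_nrm hadj with h3|h3 <;> omega
  · intro h
    refine ⟨?_, ?_⟩
    · show ¬ nrm q ≤ (M : ℤ); omega
    · have hq0 : q ≠ 0 := by
        intro hc; subst hc; simp [nrm] at h; omega
      obtain ⟨m, hadj, hm⟩ := step_to_zero hq0
      exact ⟨m, by show nrm m ≤ (M : ℤ); omega, adj_symm hadj⟩

lemma glue {d r N k : ℕ} (hd : 0 < d) (hr0 : 0 < r)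
    {x y : Site d → ZMod r} {f g : Site d → ℤ}
    (hf : LiftsTo f x) (hg : LiftsTo g y)
    (hpar : (f 0 - g 0) % 2 = 0)
    (hrange : RangeOn g (siteBdry (ball d (2 * N + 2 * r + k + 1))) ≤ 2 * (k : ℤ)) :
    ∃ z ∈ Xr d r, (∀ n ∈ ball d N, z n = x n) ∧
      ∀ n ∉ ball d (2 * N + 2 * r + k + 1), z n = y n := by
  set M : ℕ := 2 * N + 2 * r + k + 1 with hM
  obtain ⟨hfh, hfc⟩ := hf
  obtain ⟨hgh, hgc⟩ := hg
  have hrZ : (1 : ℤ) ≤ (r : ℤ) := by exact_mod_cast hr0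
  -- the sphere and the centering constant
  set i0 : Fin d := ⟨0, hd⟩ with hi0
  have hq0 : (Pi.single i0 ((M : ℤ) + 1) : Site d) ∈ siteBdry (ball d M) :=
    mem_bdry_ball.mpr (by rw [nrm_single]; rw [abs_of_nonneg (by positivity)])
  have hbddA : BddAbove (g '' siteBdry (ball d M)) := by
    refine ⟨g 0 + ((M : ℤ) + 1), ?_⟩
    rintro _ ⟨q, hq, rfl⟩
    have h1 := height_abs hgh q
    have h2 := mem_bdry_ball.mp hq
    rcases abs_cases (g q - g 0) with ⟨h3, _⟩|⟨h3, _⟩ <;> omega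
  have hbddB : BddBelow (g '' siteBdry (ball d M)) := by
    refine ⟨g 0 - ((M : ℤ) + 1), ?_⟩
    rintro _ ⟨q, hq, rfl⟩
    have h1 := height_abs hgh q
    have h2 := mem_bdry_ball.mp hq
    rcases abs_cases (g q - g 0) with ⟨h3, _⟩|⟨h3, _⟩ <;> omega
  set I : ℤ := sInf (g '' siteBdry (ball d M)) with hI
  set c : ℤ := I + k with hc
  have hqc : ∀ q : Site d, nrm q = (M : ℤ) + 1 → |g q - c| ≤ (k : ℤ) := by
    intro q hq
    have hmem : q ∈ siteBdry (ball d M) := mem_bdry_ball.mpr hq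
    have h1 : I ≤ g q := csInf_le hbddB (Set.mem_image_of_mem _ hmem)
    have h2 : g q ≤ sSup (g '' siteBdry (ball d M)) :=
      le_csSup hbddA (Set.mem_image_of_mem _ hmem)
    have h3 : sSup (g '' siteBdry (ball d M)) - I ≤ 2 * (k : ℤ) := hrange
    rcases abs_cases (g q - c) with ⟨h4, _⟩|⟨h4, _⟩ <;> omega
  -- far field control of g
  have hfar : ∀ s : ℕ, ∀ n : Site d, nrm n = (M : ℤ) + 1 + s → |g n - c| ≤ (k : ℤ) + s := by
    intro s
    induction s with
    | zero =>
      intro n hn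
      have h := hqc n (by push_cast at hn; omega)
      push_cast
      omega
    | succ s ih =>
      intro n hn
      have hn0 : n ≠ 0 := by
        intro hc'; subst hc'; simp [nrm] at hn; omega
      obtain ⟨m, hadj, hm⟩ := step_to_zero hn0
      have h1 := hgh n m hadj
      have h2 := ih m (by push_cast at hn ⊢; omega)
      push_cast at hn ⊢
      rcases abs_cases (g n - g m) with ⟨h3, _⟩|⟨h3, _⟩ <;>
        rcases abs_cases (g n - c) with ⟨h4, _⟩|⟨h4, _⟩ <;>
        rcases abs_cases (g m - c) with ⟨h5, _⟩|⟨h5, _⟩ <;> omega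
  have hfar2 : ∀ n : Site d, (M : ℤ) + 1 ≤ nrm n → |g n - c| ≤ (k : ℤ) + (nrm n - ((M : ℤ) + 1)) := by
    intro n hn
    have h := hfar (nrm n - ((M : ℤ) + 1)).toNat n
      (by rw [Int.toNat_of_nonneg (by omega)]; ring)
    rw [Int.toNat_of_nonneg (by omega)] at h
    exact h
  -- shift f by a multiple of 2r to bring it near c
  set t : ℤ := (c - f 0) / (2 * (r : ℤ)) with ht
  set s : ℤ := 2 * (r : ℤ) * t with hs
  have hs2 : s % 2 = 0 := by
    rw [hs, show 2 * (r : ℤ) * t = 2 * ((r : ℤ) * t) by ring]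
    omega
  have hszmod : ((s : ℤ) : ZMod r) = 0 := by
    rw [hs]
    push_cast
    rw [ZMod.natCast_self]
    ring
  set f' : Site d → ℤ := fun n => f n + s with hf'
  have hf'h : IsHeightFn f' := by
    intro n m h
    show |f n + s - (f m + s)| = 1
    rw [show f n + s - (f m + s) = f n - f m by ring]
    exact hfh n m h
  have hf'c : ∀ n, ((f' n : ℤ) : ZMod r) = x n := by
    intro n
    show ((f n + s : ℤ) : ZMod r) = x n
    push_cast [hszmod]
    rw [← hfc n]
    push_cast
    ring
  have hf0 : |f' 0 - c| ≤ 2 * (r : ℤ) - 1 := by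
    have h1 : f' 0 - c = -((c - f 0) % (2 * (r : ℤ))) := by
      show f 0 + s - c = _
      rw [Int.emod_def, hs, ht]
      ring
    have h2 : 0 ≤ (c - f 0) % (2 * (r : ℤ)) := Int.emod_nonneg _ (by omega)
    have h3 : (c - f 0) % (2 * (r : ℤ)) < 2 * (r : ℤ) := Int.emod_lt_of_pos _ (by omega)
    rw [h1, abs_neg, abs_of_nonneg h2]
    omega
  have hparf' : (f' 0 - g 0) % 2 = 0 := by
    show (f 0 + s - g 0) % 2 = 0
    omega
  -- the radius of the gluing sphere
  set ε : ℤ := (f' 0 - c) % 2 with hε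
  set R : ℤ := 2 * N + 2 * r + ε with hR
  have hRparity : (f' 0 - c - R) % 2 = 0 := by rw [hR, hε]; omega
  have hRlow : 2 * (N : ℤ) + 2 * r ≤ R := by rw [hR]; omega
  have hRhigh : R ≤ 2 * (N : ℤ) + 2 * r + 1 := by rw [hR]; omega
  -- tents
  set Up : Site d → ℤ := fun n => c + R - nrm n with hUp
  set Lo : Site d → ℤ := fun n => c - R + nrm n with hLo
  have hUph : IsHeightFn Up := isHeightFn_sub_nrm (c + R)
  have hLoh : IsHeightFn Lo := isHeightFn_add_nrm (c - R)
  have hpf' := height_parity hf'h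
  have hpg := height_parity hgh
  have hnn : ∀ n : Site d, 0 ≤ nrm n := nrm_nonneg
  have hefU : ∀ n, (f' n - Up n) % 2 = 0 := by
    intro n; have := hpf' n; show (f' n - (c + R - nrm n)) % 2 = 0; omega
  have hefL : ∀ n, (f' n - Lo n) % 2 = 0 := by
    intro n; have := hpf' n; show (f' n - (c - R + nrm n)) % 2 = 0; omega
  have hegU : ∀ n, (g n - Up n) % 2 = 0 := by
    intro n; have h1 := hpg n; have h2 := hpf' n
    show (g n - (c + R - nrm n)) % 2 = 0; omega
  have hegL : ∀ n, (g n - Lo n) % 2 = 0 := by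
    intro n; have h1 := hpg n; have h2 := hpf' n
    show (g n - (c - R + nrm n)) % 2 = 0; omega
  set zin : Site d → ℤ := fun n => max (min (f' n) (Up n)) (Lo n) with hzin
  set zout : Site d → ℤ := fun n => max (min (g n) (Lo n)) (Up n) with hzout
  have hzinh : IsHeightFn zin := by
    apply isHeightFn_max (isHeightFn_min hf'h hUph hefU) hLoh
    intro n
    have h1 := hefL n; have h2 := hefU n
    rcases min_cases (f' n) (Up n) with ⟨h3, _⟩|⟨h3, _⟩ <;>
      simp only [h3] <;> show _ % 2 = 0 <;> omega
  have hzouth : IsHeightFn zout := by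
    apply isHeightFn_max (isHeightFn_min hgh hLoh hegL) hUph
    intro n
    have h1 := hegU n; have h2 := hegL n
    rcases min_cases (g n) (Lo n) with ⟨h3, _⟩|⟨h3, _⟩ <;>
      simp only [h3] <;> show _ % 2 = 0 <;> omega
  have hzin_c : ∀ n : Site d, nrm n = R → zin n = c := by
    intro n hn
    show max (min (f' n) (Up n)) (Lo n) = c
    rw [show Up n = c from by show c + R - nrm n = c; omega,
      show Lo n = c from by show c - R + nrm n = c; omega]
    exact max_eq_right (min_le_right _ _)
  have hzout_c : ∀ n : Site d, nrm n = R → zout n = c := by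
    intro n hn
    show max (min (g n) (Lo n)) (Up n) = c
    rw [show Up n = c from by show c + R - nrm n = c; omega,
      show Lo n = c from by show c - R + nrm n = c; omega]
    exact max_eq_right (min_le_right _ _)
  set Z : Site d → ℤ := fun n => if nrm n ≤ R then zin n else zout n with hZ
  have hZh : IsHeightFn Z := by
    intro n m hadj
    have hd1 := adj_nrm hadj
    show |Z n - Z m| = 1
    by_cases hn : nrm n ≤ R <;> by_cases hm : nrm m ≤ R
    · rw [show Z n = zin n from by rw [hZ]; simp only [if_pos hn],
        show Z m = zin m from by rw [hZ]; simp only [if_pos hm]]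
      exact hzinh n m hadj
    · have hnR : nrm n = R := by omega
      rw [show Z n = zout n from by
          rw [hZ]; simp only [if_pos hn]; rw [hzin_c n hnR, hzout_c n hnR],
        show Z m = zout m from by rw [hZ]; simp only [if_neg hm]]
      exact hzouth n m hadj
    · have hmR : nrm m = R := by omega
      rw [show Z n = zout n from by rw [hZ]; simp only [if_neg hn],
        show Z m = zout m from by
          rw [hZ]; simp only [if_pos hm]; rw [hzin_c m hmR, hzout_c m hmR]]
      exact hzouth n m hadj
    · rw [show Z n = zout n from by rw [hZ]; simp only [if_neg hn],
        show Z m = zout m from by rw [hZ]; simp only [if_neg hm]]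
      exact hzouth n m hadj
  -- agreement with f' on the inner ball
  have hZx : ∀ n : Site d, nrm n ≤ (N : ℤ) → Z n = f' n := by
    intro n hn
    have h1 := abs_le.mp (height_abs hf'h n)
    have h0 := abs_le.mp hf0
    have h2 : nrm n ≤ R := by have := hnn n; omega
    rw [show Z n = zin n from by rw [hZ]; simp only [if_pos h2]]
    show max (min (f' n) (Up n)) (Lo n) = f' n
    have hUpge : f' n ≤ Up n := by show f' n ≤ c + R - nrm n; have := hnn n; omega
    have hLole : Lo n ≤ f' n := by show c - R + nrm n ≤ f' n; have := hnn n; omega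
    rw [min_eq_left hUpge, max_eq_left hLole]
  -- agreement with g outside the outer ball
  have hZy : ∀ n : Site d, (M : ℤ) + 1 ≤ nrm n → Z n = g n := by
    intro n hn
    have h1 := abs_le.mp (hfar2 n hn)
    have hM' : (M : ℤ) = 2 * N + 2 * r + k + 1 := by rw [hM]; push_cast; ring
    have hnR : ¬ nrm n ≤ R := by omega
    rw [show Z n = zout n from by rw [hZ]; simp only [if_neg hnR]]
    show max (min (g n) (Lo n)) (Up n) = g n
    have hgLo : g n ≤ Lo n := by show g n ≤ c - R + nrm n; omega
    have hgUp : Up n ≤ g n := by show c + R - nrm n ≤ g n; omega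
    rw [min_eq_left hgLo, max_eq_left hgUp]
  -- conclusion
  refine ⟨fun n => ((Z n : ℤ) : ZMod r), ?_, ?_, ?_⟩
  · intro n m hadj
    have h1 := hZh n m hadj
    rw [abs_eq (by norm_num : (0:ℤ) ≤ 1)] at h1
    rcases h1 with h1|h1
    · left
      have h2 : ((Z n - Z m : ℤ) : ZMod r) = ((1 : ℤ) : ZMod r) := by rw [h1]
      push_cast at h2
      exact h2
    · right
      have h2 : ((Z n - Z m : ℤ) : ZMod r) = ((-1 : ℤ) : ZMod r) := by rw [h1]
      push_cast at h2
      exact h2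
  · intro n hn
    have hn' : nrm n ≤ (N : ℤ) := hn
    show ((Z n : ℤ) : ZMod r) = x n
    rw [hZx n hn']
    exact hf'c n
  · intro n hn
    have hn' : (M : ℤ) + 1 ≤ nrm n := by
      have : ¬ nrm n ≤ (M : ℤ) := hn
      omega
    show ((Z n : ℤ) : ZMod r) = y n
    rw [hZy n hn']
    exact hgc n

end Glue

lemma adj_translate {d : ℕ} {n m : Site d} (v : Site d) (h : adjacent n m) :
    adjacent (n + v) (m + v) := by
  rw [adjacent] at h ⊢
  rw [show (∑ i, |(n + v) i - (m + v) i|) = ∑ i, |n i - m i| from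
    Finset.sum_congr rfl fun i _ => by
      rw [show (n + v) i - (m + v) i = n i - m i from by simp [Pi.add_apply]]]
  exact h


end AuxPatch

/-- (Patching an arbitrary finite configuration inside a non-steep
point.) For `d ≥ 2`, `r ∉ {1,2,4}`, `N, k ∈ ℕ`, `y ∈ X_r` with
`Range_{∂D_{2N+2r+k+1}}(y) ≤ 2k` and `x ∈ X_r`:
(1) if `r` is odd or `x_n - y_n` is even for all `n`, there is `z ∈ X_r` equal to `x` on
`D_N` and to `y` off `D_{2N+2r+k+1}`;
(2) if `r` is even and `x_n - y_n` is odd for all `n`, there is `z ∈ X_r` equal to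
`x(· + e₁)` on `D_N` and to `y` off `D_{2N+2r+k+1}`. -/
theorem patching_inside_non_steep
    (d r N k : ℕ) (hd : 2 ≤ d) (hr0 : 0 < r) (hr1 : r ≠ 1) (hr2 : r ≠ 2) (hr4 : r ≠ 4)
    (x y : Site d → ZMod r) (hx : x ∈ Xr d r) (hy : y ∈ Xr d r)
    (hrange : ∃ yh : Site d → ℤ, LiftsTo yh y ∧
      RangeOn yh (siteBdry (ball d (2 * N + 2 * r + k + 1))) ≤ 2 * (k : ℤ)) :
    ((Odd r ∨ ∀ n : Site d, ∃ m : ℤ, Even m ∧ ((m : ZMod r)) = x n - y n) →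
      ∃ z ∈ Xr d r, (∀ n ∈ ball d N, z n = x n) ∧
        ∀ n ∉ ball d (2 * N + 2 * r + k + 1), z n = y n) ∧
    ((Even r ∧ ∀ n : Site d, ∃ m : ℤ, Odd m ∧ ((m : ZMod r)) = x n - y n) →
      ∃ z ∈ Xr d r,
        (∀ n ∈ ball d N, z n = x (n + Pi.single (⟨0, by omega⟩ : Fin d) 1)) ∧
        ∀ n ∉ ball d (2 * N + 2 * r + k + 1), z n = y n) := by
  haveI : NeZero r := ⟨hr0.ne'⟩
  have h2 : (2 : ZMod r) ≠ 0 := by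
    intro hc
    have : ((2 : ℕ) : ZMod r) = 0 := by exact_mod_cast hc
    have hdvd : r ∣ 2 := (ZMod.natCast_eq_zero_iff 2 r).mp this
    have hle : r ≤ 2 := Nat.le_of_dvd (by norm_num) hdvd
    interval_cases r <;> omega
  have h4 : (4 : ZMod r) ≠ 0 := by
    intro hc
    have : ((4 : ℕ) : ZMod r) = 0 := by exact_mod_cast hc
    have hdvd : r ∣ 4 := (ZMod.natCast_eq_zero_iff 4 r).mp this
    have hle : r ≤ 4 := Nat.le_of_dvd (by norm_num) hdvd
    interval_cases r <;> omega
  obtain ⟨yh, hyh, hyrange⟩ := hrange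
  obtain ⟨f, hfl⟩ := exists_lift x hx h2 h4
  have hd0 : 0 < d := by omega
  -- divisibility helper
  have hdvdhelp : ∀ m : ℤ, ((m : ZMod r)) = x 0 - y 0 → (r : ℤ) ∣ (f 0 - yh 0 - m) := by
    intro m hm
    apply (ZMod.intCast_zmod_eq_zero_iff_dvd _ _).mp
    push_cast
    rw [hfl.2 0, hyh.2 0, hm]
    ring
  constructor
  · -- Case 1
    intro h1
    rcases Int.emod_two_eq (f 0 - yh 0) with hpar|hpar
    · exact glue hd0 hr0 hfl hyh hpar hyrange
    · -- the difference is odd; then r must be odd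
      have hrodd : r % 2 = 1 := by
        rcases h1 with hodd|hres
        · exact Nat.odd_iff.mp hodd
        · obtain ⟨m, hmeven, hmc⟩ := hres 0
          obtain ⟨e, he⟩ := hdvdhelp m hmc
          rw [Int.even_iff] at hmeven
          have hoddprod : Odd ((r : ℤ) * e) := by
            rw [← he, Int.odd_iff]
            omega
          have hoddr : Odd (r : ℤ) := (Int.odd_mul.mp hoddprod).1
          rw [Int.odd_coe_nat] at hoddr
          exact Nat.odd_iff.mp hoddr
      -- use f + r
      have hfl' : LiftsTo (fun n => f n + r) x := by
        constructor
        · intro n m h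
          show |f n + r - (f m + r)| = 1
          rw [show f n + (r:ℤ) - (f m + r) = f n - f m from by ring]
          exact hfl.1 n m h
        · intro n
          show ((f n + r : ℤ) : ZMod r) = x n
          push_cast
          rw [ZMod.natCast_self, hfl.2 n]
          ring
      have hpar' : ((fun n => f n + (r:ℤ)) 0 - yh 0) % 2 = 0 := by
        show (f 0 + (r:ℤ) - yh 0) % 2 = 0
        have : ((r:ℤ)) % 2 = 1 := by omega
        omega
      exact glue hd0 hr0 hfl' hyh hpar' hyrange
  · -- Case 2
    rintro ⟨hreven, hres⟩
    set e1 : Site d := Pi.single (⟨0, by omega⟩ : Fin d) 1 with he1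
    have hadj_e1 : adjacent e1 0 := by
      rw [adj_iff]
      refine ⟨⟨0, by omega⟩, ?_, fun j hj => ?_⟩
      · rw [he1]; simp [Pi.single_eq_same]
      · rw [he1]; simp [Pi.single_eq_of_ne hj]
    have hfl' : LiftsTo (fun n => f (n + e1)) (fun n => x (n + e1)) := by
      constructor
      · intro n m h
        exact hfl.1 (n + e1) (m + e1) (adj_translate e1 h)
      · intro n
        exact hfl.2 (n + e1)
    have hpar' : ((fun n => f (n + e1)) 0 - yh 0) % 2 = 0 := by
      show (f (0 + e1) - yh 0) % 2 = 0
      rw [zero_add]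
      have hstep := hfl.1 e1 0 hadj_e1
      -- f 0 - yh 0 is odd
      obtain ⟨m, hmodd, hmc⟩ := hres 0
      obtain ⟨e, he⟩ := hdvdhelp m hmc
      rw [Int.odd_iff] at hmodd
      have hreven' : (r : ℤ) % 2 = 0 := by
        rw [Nat.even_iff] at hreven
        omega
      set p : ℤ := (r : ℤ) * e with hp
      have hpe : p % 2 = 0 := by
        have : Even p := by
          rw [hp]; exact Int.even_mul.mpr (Or.inl (Int.even_iff.mpr hreven'))
        rwa [Int.even_iff] at this
      rcases abs_cases (f e1 - f 0) with ⟨h5, _⟩|⟨h5, _⟩ <;> omega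
    have := glue hd0 hr0 hfl' hyh hpar' hyrange
    obtain ⟨z, hz1, hz2, hz3⟩ := this
    exact ⟨z, hz1, hz2, hz3⟩
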